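/- For every positive integer k, there do not exist a positive integer d and positive semidefinite Hermitian d×d complex matrices A_1,…,A_8 such that (f_8(x))^k = det(x_1 A_1 + ⋯ + x_8 A_8) as polynomials in x_1,…,x_8, where f_8 is the basis generating polynomial of the Vámos matroid V_8. -/

import Mathlib

open MvPolynomial
open scoped ComplexOrder

/-- The collection of bases of the 8-element Vámos matroid `V₈`: all 4-element subsets
of `{1,…,8}` except `{1,2,3,4}, {1,2,5,6}, {1,2,7,8}, {3,4,5,6}, {5,6,7,8}`. -/
def vamosBases8 : Finset (Finset ℕ) :=
  ((Finset.Icc 1 8).powersetCard 4) \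
    {{1, 2, 3, 4}, {1, 2, 5, 6}, {1, 2, 7, 8}, {3, 4, 5, 6}, {5, 6, 7, 8}}

/-- The basis generating polynomial `f₈ = Σ_{B} Π_{i ∈ B} xᵢ ∈ ℝ[x₁,…,x₈]` of the
Vámos matroid `V₈`. -/
noncomputable def f8 : MvPolynomial ℕ ℝ :=
  ∑ B ∈ vamosBases8, ∏ i ∈ B, X i

namespace VamosAux
open Polynomial Matrix

variable {d : ℕ}

lemma f8map : MvPolynomial.map (algebraMap ℝ ℂ) f8
    = ∑ B ∈ vamosBases8, ∏ i ∈ B, (MvPolynomial.X i : MvPolynomial ℕ ℂ) := by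
  simp only [f8, _root_.map_sum, _root_.map_prod, MvPolynomial.map_X]

lemma detdeg_one (P : Matrix (Fin d) (Fin d) ℂ) (hP : P.IsHermitian) :
    (Matrix.det ((X : ℂ[X]) • P.map Polynomial.C + 1)).natDegree = P.rank := by
  classical
  set U : Matrix (Fin d) (Fin d) ℂ := (hP.eigenvectorUnitary : Matrix (Fin d) (Fin d) ℂ) with hU
  have hspec := hP.spectral_theorem
  have hUU : U * star U = 1 := (Matrix.mem_unitaryGroup_iff).mp hP.eigenvectorUnitary.2
  have key : (X : ℂ[X]) • P.map Polynomial.C + 1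
      = (Polynomial.C.mapMatrix U) *
        ((X : ℂ[X]) • (Matrix.diagonal (RCLike.ofReal ∘ hP.eigenvalues)).map Polynomial.C + 1) *
        (Polynomial.C.mapMatrix (star U)) := by
    rw [Matrix.mul_add, Matrix.add_mul]
    rw [Matrix.mul_smul, Matrix.smul_mul]
    congr 1
    · congr 1
      show Polynomial.C.mapMatrix P = Polynomial.C.mapMatrix U *
        Polynomial.C.mapMatrix (Matrix.diagonal (RCLike.ofReal ∘ hP.eigenvalues)) *
        Polynomial.C.mapMatrix (star U)
      rw [← _root_.map_mul, ← _root_.map_mul]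
      exact congrArg _ hspec
    · rw [Matrix.mul_one, ← _root_.map_mul, hUU, _root_.map_one]
  rw [key, Matrix.det_mul, Matrix.det_mul]
  have hmid : ((X : ℂ[X]) • (Matrix.diagonal (RCLike.ofReal ∘ hP.eigenvalues)).map Polynomial.C + 1)
      = Matrix.diagonal (fun i => (X : ℂ[X]) * Polynomial.C (hP.eigenvalues i : ℂ) + 1) := by
    ext i j
    by_cases h : i = j <;>
      simp [Matrix.diagonal_apply, h, Matrix.one_apply]
  rw [hmid, Matrix.det_diagonal]
  have hfac : ∀ i : Fin d, ((X : ℂ[X]) * Polynomial.C (hP.eigenvalues i : ℂ) + 1) ≠ 0 := by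
    intro i h
    have := congrArg (fun p => Polynomial.coeff p 0) h
    simp [Polynomial.coeff_X_mul] at this
  have hdeg : ((Polynomial.C.mapMatrix U).det
        * (∏ i, ((X : ℂ[X]) * Polynomial.C (hP.eigenvalues i : ℂ) + 1))
        * (Polynomial.C.mapMatrix (star U)).det).natDegree
      = (∏ i, ((X : ℂ[X]) * Polynomial.C (hP.eigenvalues i : ℂ) + 1)).natDegree := by
    have h1 : (Polynomial.C.mapMatrix U).det = Polynomial.C U.det := by
      rw [← RingHom.map_det]
    have h2 : (Polynomial.C.mapMatrix (star U)).det = Polynomial.C (star U).det := by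
      rw [← RingHom.map_det]
    have hu1 : U.det ≠ 0 := by
      intro h; apply one_ne_zero (α := ℂ); rw [← Matrix.det_one (n := Fin d), ← hUU,
        Matrix.det_mul, h, zero_mul]
    have hu2 : (star U).det ≠ 0 := by
      intro h; apply one_ne_zero (α := ℂ); rw [← Matrix.det_one (n := Fin d), ← hUU,
        Matrix.det_mul, h, mul_zero]
    rw [h1, h2, mul_comm, ← mul_assoc, ← Polynomial.C_mul,
      Polynomial.natDegree_C_mul (mul_ne_zero hu2 hu1)]
  rw [hdeg, Polynomial.natDegree_prod _ _ (fun i _ => hfac i)]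
  have hterm : ∀ i : Fin d, ((X : ℂ[X]) * Polynomial.C (hP.eigenvalues i : ℂ) + 1).natDegree
      = if hP.eigenvalues i ≠ 0 then 1 else 0 := by
    intro i
    by_cases h : hP.eigenvalues i = 0
    · simp [h]
    · rw [if_pos h, mul_comm]
      have hc : (hP.eigenvalues i : ℂ) ≠ 0 := by exact_mod_cast h
      have := Polynomial.natDegree_linear (b := (1:ℂ)) hc
      simpa using this
  rw [Finset.sum_congr rfl (fun i _ => hterm i), hP.rank_eq_card_non_zero_eigs,
    Fintype.card_subtype, Finset.sum_ite, Finset.sum_const, Finset.sum_const]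
  simp

lemma detdeg (P Q : Matrix (Fin d) (Fin d) ℂ) (hP : P.IsHermitian) (hQ : Q.PosSemidef)
    (hQd : Q.det ≠ 0) :
    (Matrix.det ((X : ℂ[X]) • P.map Polynomial.C + Q.map Polynomial.C)).natDegree = P.rank := by
  classical
  obtain ⟨B, rfl⟩ : ∃ B : Matrix (Fin d) (Fin d) ℂ, Q = Bᴴ * B := by
    open scoped MatrixOrder in exact CStarAlgebra.nonneg_iff_eq_star_mul_self.mp hQ.nonneg
  rw [Matrix.det_mul] at hQd
  have hb : IsUnit B.det := isUnit_iff_ne_zero.mpr fun h => hQd (by rw [h, mul_zero])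
  have hbH : IsUnit (Bᴴ).det := isUnit_iff_ne_zero.mpr fun h => hQd (by rw [h, zero_mul])
  set PP : Matrix (Fin d) (Fin d) ℂ := (Bᴴ)⁻¹ * P * B⁻¹ with hPP
  have hPPH : PP.IsHermitian := by
    have h0 : PPᴴ = (B⁻¹)ᴴ * Pᴴ * ((Bᴴ)⁻¹)ᴴ := by
      rw [hPP, Matrix.conjTranspose_mul, Matrix.conjTranspose_mul, Matrix.mul_assoc]
    rw [Matrix.IsHermitian, h0, hP.eq, Matrix.conjTranspose_nonsing_inv,
      Matrix.conjTranspose_nonsing_inv, Matrix.conjTranspose_conjTranspose]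
  have hrec : Bᴴ * PP * B = P := by
    rw [hPP, ← Matrix.mul_assoc, ← Matrix.mul_assoc, Matrix.mul_nonsing_inv _ hbH, Matrix.one_mul,
      Matrix.mul_assoc, Matrix.nonsing_inv_mul _ hb, Matrix.mul_one]
  have key : (X : ℂ[X]) • P.map Polynomial.C + (Bᴴ * B).map Polynomial.C
      = (Polynomial.C.mapMatrix Bᴴ) * ((X : ℂ[X]) • PP.map Polynomial.C + 1) *
        (Polynomial.C.mapMatrix B) := by
    rw [Matrix.mul_add, Matrix.add_mul, Matrix.mul_smul, Matrix.smul_mul]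
    congr 1
    · congr 1
      show Polynomial.C.mapMatrix P
        = Polynomial.C.mapMatrix Bᴴ * Polynomial.C.mapMatrix PP * Polynomial.C.mapMatrix B
      rw [← _root_.map_mul, ← _root_.map_mul, hrec]
    · rw [Matrix.mul_one]
      show Polynomial.C.mapMatrix (Bᴴ * B) = _
      rw [_root_.map_mul]
  rw [key, Matrix.det_mul, Matrix.det_mul]
  have h1 : (Polynomial.C.mapMatrix Bᴴ).det = Polynomial.C (Bᴴ).det := by rw [← RingHom.map_det]
  have h2 : (Polynomial.C.mapMatrix B).det = Polynomial.C B.det := by rw [← RingHom.map_det]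
  rw [h1, h2, mul_comm, ← mul_assoc, ← Polynomial.C_mul,
    Polynomial.natDegree_C_mul (mul_ne_zero hb.ne_zero hbH.ne_zero), detdeg_one _ hPPH]
  rw [← hrec, Matrix.mul_assoc, Matrix.rank_mul_eq_right_of_isUnit_det _ _ hbH,
    Matrix.rank_mul_eq_left_of_isUnit_det _ _ hb]

lemma sum_mulVec' (S : Finset ℕ) (A : ℕ → Matrix (Fin d) (Fin d) ℂ) (x : Fin d → ℂ) :
    (∑ i ∈ S, A i) *ᵥ x = ∑ i ∈ S, A i *ᵥ x := by
  ext j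
  simp only [Matrix.mulVec, dotProduct, Matrix.sum_apply, Finset.sum_mul]
  rw [Finset.sum_comm]
  simp [Matrix.mulVec, dotProduct, Finset.sum_apply]

lemma ker_add (P Q : Matrix (Fin d) (Fin d) ℂ) (hP : P.PosSemidef) (hQ : Q.PosSemidef) :
    LinearMap.ker (P + Q).mulVecLin
      = LinearMap.ker P.mulVecLin ⊓ LinearMap.ker Q.mulVecLin := by
  ext x
  simp only [LinearMap.mem_ker, Matrix.mulVecLin_apply, Submodule.mem_inf]
  constructor
  · intro hx
    have h0 : star x ⬝ᵥ P *ᵥ x + star x ⬝ᵥ Q *ᵥ x = 0 := by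
      rw [← dotProduct_add, ← Matrix.add_mulVec, hx, dotProduct_zero]
    have h1 : star x ⬝ᵥ P *ᵥ x = 0 ∧ star x ⬝ᵥ Q *ᵥ x = 0 :=
      (add_eq_zero_iff_of_nonneg (hP.dotProduct_mulVec_nonneg x) (hQ.dotProduct_mulVec_nonneg x)).mp h0
    exact ⟨(hP.dotProduct_mulVec_zero_iff x).mp h1.1, (hQ.dotProduct_mulVec_zero_iff x).mp h1.2⟩
  · rintro ⟨h1, h2⟩
    rw [Matrix.add_mulVec, h1, h2, add_zero]

lemma psd_sum (S : Finset ℕ) (A : ℕ → Matrix (Fin d) (Fin d) ℂ)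
    (h : ∀ i ∈ S, (A i).PosSemidef) : (∑ i ∈ S, A i).PosSemidef := by
  classical
  induction S using Finset.induction_on with
  | empty => simpa using Matrix.PosSemidef.zero
  | @insert a s hx ih =>
    rw [Finset.sum_insert hx]
    exact (h a (Finset.mem_insert_self a s)).add
      (ih fun i hi => h i (Finset.mem_insert_of_mem hi))

lemma ker_sum (S : Finset ℕ) (A : ℕ → Matrix (Fin d) (Fin d) ℂ)
    (h : ∀ i ∈ S, (A i).PosSemidef) :
    LinearMap.ker (∑ i ∈ S, A i).mulVecLin = ⨅ i ∈ S, LinearMap.ker (A i).mulVecLin := by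
  classical
  induction S using Finset.induction_on with
  | empty => simp
  | @insert a s hx ih =>
    rw [Finset.sum_insert hx,
      ker_add _ _ (h a (Finset.mem_insert_self a s))
        (psd_sum s A fun i hi => h i (Finset.mem_insert_of_mem hi)),
      ih (fun i hi => h i (Finset.mem_insert_of_mem hi))]
    exact (Finset.iInf_insert a s (fun i => LinearMap.ker (A i).mulVecLin)).symm

open Submodule Module in
lemma ingleton_dual (A B C D : Submodule ℂ (Fin d → ℂ)) :
    finrank ℂ ↥(A ⊓ C) + finrank ℂ ↥(A ⊓ D) + finrank ℂ ↥(B ⊓ C) + finrank ℂ ↥(B ⊓ D)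
      + finrank ℂ ↥(C ⊓ D)
    ≤ finrank ℂ ↥(A ⊓ B) + finrank ℂ ↥(A ⊓ (C ⊓ D)) + finrank ℂ ↥(B ⊓ (C ⊓ D))
      + finrank ℂ ↥C + finrank ℂ ↥D := by
  have eA : finrank ℂ ↥((A ⊓ C) ⊔ (A ⊓ D)) + finrank ℂ ↥((A ⊓ C) ⊓ (A ⊓ D))
      = finrank ℂ ↥(A ⊓ C) + finrank ℂ ↥(A ⊓ D) :=
    Submodule.finrank_sup_add_finrank_inf_eq _ _
  have eA2 : (A ⊓ C) ⊓ (A ⊓ D) = A ⊓ (C ⊓ D) := by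
    refine le_antisymm (le_inf (inf_le_left.trans inf_le_left)
      (le_inf (inf_le_left.trans inf_le_right) (inf_le_right.trans inf_le_right))) ?_
    exact le_inf (le_inf inf_le_left (inf_le_right.trans inf_le_left))
      (le_inf inf_le_left (inf_le_right.trans inf_le_right))
  have eA3 : (A ⊓ C) ⊔ (A ⊓ D) ≤ A ⊓ (C ⊔ D) :=
    sup_le (le_inf inf_le_left (inf_le_right.trans le_sup_left))
      (le_inf inf_le_left (inf_le_right.trans le_sup_right))
  have eB : finrank ℂ ↥((B ⊓ C) ⊔ (B ⊓ D)) + finrank ℂ ↥((B ⊓ C) ⊓ (B ⊓ D))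
      = finrank ℂ ↥(B ⊓ C) + finrank ℂ ↥(B ⊓ D) :=
    Submodule.finrank_sup_add_finrank_inf_eq _ _
  have eB2 : (B ⊓ C) ⊓ (B ⊓ D) = B ⊓ (C ⊓ D) := by
    refine le_antisymm (le_inf (inf_le_left.trans inf_le_left)
      (le_inf (inf_le_left.trans inf_le_right) (inf_le_right.trans inf_le_right))) ?_
    exact le_inf (le_inf inf_le_left (inf_le_right.trans inf_le_left))
      (le_inf inf_le_left (inf_le_right.trans inf_le_right))
  have eB3 : (B ⊓ C) ⊔ (B ⊓ D) ≤ B ⊓ (C ⊔ D) :=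
    sup_le (le_inf inf_le_left (inf_le_right.trans le_sup_left))
      (le_inf inf_le_left (inf_le_right.trans le_sup_right))
  have e3 : finrank ℂ ↥((A ⊓ (C ⊔ D)) ⊔ (B ⊓ (C ⊔ D)))
        + finrank ℂ ↥((A ⊓ (C ⊔ D)) ⊓ (B ⊓ (C ⊔ D)))
      = finrank ℂ ↥(A ⊓ (C ⊔ D)) + finrank ℂ ↥(B ⊓ (C ⊔ D)) :=
    Submodule.finrank_sup_add_finrank_inf_eq _ _
  have e3a : (A ⊓ (C ⊔ D)) ⊔ (B ⊓ (C ⊔ D)) ≤ C ⊔ D := sup_le inf_le_right inf_le_right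
  have e3b : (A ⊓ (C ⊔ D)) ⊓ (B ⊓ (C ⊔ D)) ≤ A ⊓ B :=
    le_inf (inf_le_left.trans inf_le_left) (inf_le_right.trans inf_le_left)
  have e4 : finrank ℂ ↥(C ⊔ D) + finrank ℂ ↥(C ⊓ D) = finrank ℂ ↥C + finrank ℂ ↥D :=
    Submodule.finrank_sup_add_finrank_inf_eq _ _
  have mA3 := Submodule.finrank_mono eA3
  have mB3 := Submodule.finrank_mono eB3
  have m3a := Submodule.finrank_mono e3a
  have m3b := Submodule.finrank_mono e3b
  rw [eA2] at eA
  rw [eB2] at eB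
  omega

open Module in
lemma rank_add_ker (P : Matrix (Fin d) (Fin d) ℂ) :
    P.rank + finrank ℂ ↥(LinearMap.ker P.mulVecLin) = d := by
  have h := LinearMap.finrank_range_add_finrank_ker P.mulVecLin
  have h2 : finrank ℂ (Fin d → ℂ) = d := by simp
  rw [h2] at h
  exact h

/-- The key step: from the determinantal identity, for every `S ⊆ {1,…,8}` with
`r = max_B |B ∩ S|`, we get `rank (∑_{i∈S} A i) = k * r`. -/
lemma step (k : ℕ) (A : ℕ → Matrix (Fin d) (Fin d) ℂ)
    (hA : ∀ i ∈ Finset.Icc 1 8, (A i).PosSemidef)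
    (hdet : (∑ i ∈ Finset.Icc 1 8, A i).det ≠ 0)
    (hrep : (MvPolynomial.map (algebraMap ℝ ℂ) f8) ^ k =
      (∑ i ∈ Finset.Icc 1 8,
        (MvPolynomial.X i : MvPolynomial ℕ ℂ) • (A i).map MvPolynomial.C).det)
    (S : Finset ℕ) (hS : S ⊆ Finset.Icc 1 8) (r : ℕ)
    (h1 : ∀ B ∈ vamosBases8, (B ∩ S).card ≤ r)
    (h2 : (∑ B ∈ vamosBases8, Nat.choose (B ∩ S).card r) ≠ 0) :
    (∑ i ∈ S, A i).rank = k * r := by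
  classical
  set σ : ℕ → ℂ[X] := fun i => if i ∈ S then (X : ℂ[X]) + 1 else 1 with hσ
  have hφrep := congrArg (MvPolynomial.aeval σ) hrep
  -- LHS
  have hf8 : MvPolynomial.aeval σ (MvPolynomial.map (algebraMap ℝ ℂ) f8)
      = ∑ B ∈ vamosBases8, ((X : ℂ[X]) + 1) ^ (B ∩ S).card := by
    rw [f8map, _root_.map_sum]
    refine Finset.sum_congr rfl fun B _ => ?_
    rw [_root_.map_prod]
    simp_rw [MvPolynomial.aeval_X, hσ]
    rw [Finset.prod_ite_mem, Finset.prod_const]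
  have hmono : ((X : ℂ[X]) + 1).Monic := by
    have := Polynomial.monic_X_add_C (1 : ℂ)
    simpa using this
  have hd1 : ((X : ℂ[X]) + 1).natDegree = 1 := by
    have := Polynomial.natDegree_X_add_C (1 : ℂ)
    simpa using this
  have hcoe : (∑ B ∈ vamosBases8, ((X : ℂ[X]) + 1) ^ (B ∩ S).card).coeff r
      = ((∑ B ∈ vamosBases8, Nat.choose (B ∩ S).card r : ℕ) : ℂ) := by
    rw [Polynomial.finset_sum_coeff]
    push_cast
    exact Finset.sum_congr rfl fun B _ => Polynomial.coeff_X_add_one_pow ℂ _ r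
  have hcne : (∑ B ∈ vamosBases8, ((X : ℂ[X]) + 1) ^ (B ∩ S).card).coeff r ≠ 0 := by
    rw [hcoe]
    exact_mod_cast h2
  have hg : (∑ B ∈ vamosBases8, ((X : ℂ[X]) + 1) ^ (B ∩ S).card).natDegree = r := by
    refine le_antisymm ?_ (Polynomial.le_natDegree_of_ne_zero hcne)
    refine Polynomial.natDegree_sum_le_of_forall_le _ _ fun B hB => ?_
    rw [hmono.natDegree_pow, hd1, mul_one]
    exact h1 B hB
  have hgne : (∑ B ∈ vamosBases8, ((X : ℂ[X]) + 1) ^ (B ∩ S).card) ≠ 0 :=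
    fun h => hcne (by rw [h, Polynomial.coeff_zero])
  have hL : (MvPolynomial.aeval σ ((MvPolynomial.map (algebraMap ℝ ℂ) f8) ^ k)).natDegree
      = k * r := by
    rw [map_pow, hf8, Polynomial.natDegree_pow, hg]
  -- RHS
  have hN : (MvPolynomial.aeval σ)
      (∑ i ∈ Finset.Icc 1 8,
        (MvPolynomial.X i : MvPolynomial ℕ ℂ) • (A i).map MvPolynomial.C).det
      = Matrix.det ((X : ℂ[X]) • (∑ i ∈ S, A i).map Polynomial.C
          + (∑ i ∈ Finset.Icc 1 8, A i).map Polynomial.C) := by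
    rw [AlgHom.map_det]
    congr 1
    refine Matrix.ext fun i j => ?_
    simp only [AlgHom.mapMatrix_apply, Matrix.map_apply, Matrix.sum_apply, Matrix.smul_apply,
      smul_eq_mul, Matrix.add_apply]
    rw [_root_.map_sum]
    have hsplit : ∀ t ∈ Finset.Icc 1 8,
        (MvPolynomial.aeval σ) (MvPolynomial.X t * MvPolynomial.C (A t i j))
        = σ t * Polynomial.C (A t i j) := by
      intro t _
      rw [_root_.map_mul, MvPolynomial.aeval_X, MvPolynomial.aeval_C, Polynomial.algebraMap_eq]
    rw [Finset.sum_congr rfl hsplit, ← Finset.sum_sdiff hS]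
    have hout : ∀ t ∈ Finset.Icc 1 8 \ S, σ t * Polynomial.C (A t i j)
        = Polynomial.C (A t i j) := by
      intro t ht
      rw [hσ]
      simp only [if_neg (Finset.mem_sdiff.mp ht).2, one_mul]
    have hin : ∀ t ∈ S, σ t * Polynomial.C (A t i j)
        = (X : ℂ[X]) * Polynomial.C (A t i j) + Polynomial.C (A t i j) := by
      intro t ht
      rw [hσ]
      simp only [if_pos ht]
      ring
    rw [Finset.sum_congr rfl hout, Finset.sum_congr rfl hin, Finset.sum_add_distrib]
    simp only [← Finset.mul_sum, ← _root_.map_sum, Matrix.sum_apply]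
    rw [← Finset.sum_sdiff hS (f := fun t => A t i j), _root_.map_add]
    ring
  rw [hN] at hφrep
  have hdeg := congrArg Polynomial.natDegree hφrep
  have herm : (∑ i ∈ S, A i).IsHermitian :=
    (psd_sum S A fun i hi => hA i (hS hi)).1
  have hpsd : (∑ i ∈ Finset.Icc 1 8, A i).PosSemidef := psd_sum _ A hA
  rw [hL, detdeg _ _ herm hpsd hdet] at hdeg
  exact hdeg.symm

lemma detM (k : ℕ) (A : ℕ → Matrix (Fin d) (Fin d) ℂ)
    (hrep : (MvPolynomial.map (algebraMap ℝ ℂ) f8) ^ k =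
      (∑ i ∈ Finset.Icc 1 8,
        (MvPolynomial.X i : MvPolynomial ℕ ℂ) • (A i).map MvPolynomial.C).det) :
    (∑ i ∈ Finset.Icc 1 8, A i).det ≠ 0 := by
  classical
  have h := congrArg (MvPolynomial.aeval (fun _ : ℕ => (1 : ℂ))) hrep
  have hL : MvPolynomial.aeval (fun _ : ℕ => (1 : ℂ))
      ((MvPolynomial.map (algebraMap ℝ ℂ) f8) ^ k) = (vamosBases8.card : ℂ) ^ k := by
    rw [map_pow]
    congr 1
    rw [f8map, _root_.map_sum]
    simp only [_root_.map_prod, MvPolynomial.aeval_X, Finset.prod_const_one]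
    simp
  have hR : MvPolynomial.aeval (fun _ : ℕ => (1 : ℂ))
      (∑ i ∈ Finset.Icc 1 8,
        (MvPolynomial.X i : MvPolynomial ℕ ℂ) • (A i).map MvPolynomial.C).det
      = (∑ i ∈ Finset.Icc 1 8, A i).det := by
    rw [AlgHom.map_det]
    congr 1
    refine Matrix.ext fun i j => ?_
    simp only [AlgHom.mapMatrix_apply, Matrix.map_apply, Matrix.sum_apply, Matrix.smul_apply,
      smul_eq_mul, _root_.map_sum, _root_.map_mul, MvPolynomial.aeval_X, MvPolynomial.aeval_C,
      one_mul]
    simp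
  rw [hL, hR] at h
  rw [← h]
  exact pow_ne_zero _ (Nat.cast_ne_zero.mpr (by decide))

end VamosAux

set_option maxHeartbeats 2000000 in
open VamosAux in
/-- No power of `f₈` has a definite determinantal representation: for every `k ≥ 1`
there are no `d ≥ 1` and positive semidefinite Hermitian `d × d` complex matrices
`A₁, …, A₈` with `(f₈)^k = det (x₁ A₁ + ⋯ + x₈ A₈)`. -/
theorem f8_pow_no_definite_determinantal_rep :
    ∀ k : ℕ, 0 < k →
      ¬ ∃ (d : ℕ) (A : ℕ → Matrix (Fin d) (Fin d) ℂ),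
          0 < d ∧ (∀ i ∈ Finset.Icc 1 8, (A i).PosSemidef) ∧
          (MvPolynomial.map (algebraMap ℝ ℂ) f8) ^ k =
            (∑ i ∈ Finset.Icc 1 8,
              (MvPolynomial.X i : MvPolynomial ℕ ℂ) • (A i).map MvPolynomial.C).det := by
  intro k hk
  rintro ⟨d, A, hd, hA, hrep⟩
  classical
  have hdet := detM k A hrep
  set W : ℕ → Submodule ℂ (Fin d → ℂ) := fun i => LinearMap.ker (A i).mulVecLin with hW
  have key : ∀ S : Finset ℕ, S ⊆ Finset.Icc 1 8 → ∀ r : ℕ,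
      (∀ B ∈ vamosBases8, (B ∩ S).card ≤ r) →
      ((∑ B ∈ vamosBases8, Nat.choose (B ∩ S).card r) ≠ 0) →
      k * r + Module.finrank ℂ ↥(⨅ i ∈ S, W i) = d := by
    intro S hS r h1 h2
    have hrank := step k A hA hdet hrep S hS r h1 h2
    have h3 := rank_add_ker (∑ i ∈ S, A i)
    rw [hrank, ker_sum S A (fun i hi => hA i (hS hi))] at h3
    exact h3
  have h1 := key {1,2,3,4} (by decide) 3 (by decide) (by decide)
  have h2 := key {3,4,5,6} (by decide) 3 (by decide) (by decide)
  have h3 := key {1,2,7,8} (by decide) 3 (by decide) (by decide)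
  have h4 := key {5,6,7,8} (by decide) 3 (by decide) (by decide)
  have h5 := key {1,2,5,6} (by decide) 3 (by decide) (by decide)
  have h6 := key {3,4,7,8} (by decide) 4 (by decide) (by decide)
  have h7 := key {1,2,3,4,5,6} (by decide) 4 (by decide) (by decide)
  have h8 := key {1,2,5,6,7,8} (by decide) 4 (by decide) (by decide)
  have h9 := key {1,2} (by decide) 2 (by decide) (by decide)
  have h10 := key {5,6} (by decide) 2 (by decide) (by decide)
  have hs1 : (⨅ i ∈ ({1,2,3,4} : Finset ℕ), W i) = (W 3 ⊓ W 4) ⊓ (W 1 ⊓ W 2) := by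
    rw [Finset.iInf_insert, Finset.iInf_insert, Finset.iInf_insert, Finset.iInf_singleton]
    simp only [inf_comm, inf_left_comm, inf_assoc]
  have hs2 : (⨅ i ∈ ({3,4,5,6} : Finset ℕ), W i) = (W 3 ⊓ W 4) ⊓ (W 5 ⊓ W 6) := by
    rw [Finset.iInf_insert, Finset.iInf_insert, Finset.iInf_insert, Finset.iInf_singleton]
    simp only [inf_comm, inf_left_comm, inf_assoc]
  have hs3 : (⨅ i ∈ ({1,2,7,8} : Finset ℕ), W i) = (W 7 ⊓ W 8) ⊓ (W 1 ⊓ W 2) := by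
    rw [Finset.iInf_insert, Finset.iInf_insert, Finset.iInf_insert, Finset.iInf_singleton]
    simp only [inf_comm, inf_left_comm, inf_assoc]
  have hs4 : (⨅ i ∈ ({5,6,7,8} : Finset ℕ), W i) = (W 7 ⊓ W 8) ⊓ (W 5 ⊓ W 6) := by
    rw [Finset.iInf_insert, Finset.iInf_insert, Finset.iInf_insert, Finset.iInf_singleton]
    simp only [inf_comm, inf_left_comm, inf_assoc]
  have hs5 : (⨅ i ∈ ({1,2,5,6} : Finset ℕ), W i) = (W 1 ⊓ W 2) ⊓ (W 5 ⊓ W 6) := by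
    rw [Finset.iInf_insert, Finset.iInf_insert, Finset.iInf_insert, Finset.iInf_singleton]
    simp only [inf_comm, inf_left_comm, inf_assoc]
  have hs6 : (⨅ i ∈ ({3,4,7,8} : Finset ℕ), W i) = (W 3 ⊓ W 4) ⊓ (W 7 ⊓ W 8) := by
    rw [Finset.iInf_insert, Finset.iInf_insert, Finset.iInf_insert, Finset.iInf_singleton]
    simp only [inf_comm, inf_left_comm, inf_assoc]
  have hs7 : (⨅ i ∈ ({1,2,3,4,5,6} : Finset ℕ), W i)
      = (W 3 ⊓ W 4) ⊓ ((W 1 ⊓ W 2) ⊓ (W 5 ⊓ W 6)) := by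
    rw [Finset.iInf_insert, Finset.iInf_insert, Finset.iInf_insert, Finset.iInf_insert,
      Finset.iInf_insert, Finset.iInf_singleton]
    simp only [inf_comm, inf_left_comm, inf_assoc]
  have hs8 : (⨅ i ∈ ({1,2,5,6,7,8} : Finset ℕ), W i)
      = (W 7 ⊓ W 8) ⊓ ((W 1 ⊓ W 2) ⊓ (W 5 ⊓ W 6)) := by
    rw [Finset.iInf_insert, Finset.iInf_insert, Finset.iInf_insert, Finset.iInf_insert,
      Finset.iInf_insert, Finset.iInf_singleton]
    simp only [inf_comm, inf_left_comm, inf_assoc]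
  have hs9 : (⨅ i ∈ ({1,2} : Finset ℕ), W i) = W 1 ⊓ W 2 := by
    rw [Finset.iInf_insert, Finset.iInf_singleton]
  have hs10 : (⨅ i ∈ ({5,6} : Finset ℕ), W i) = W 5 ⊓ W 6 := by
    rw [Finset.iInf_insert, Finset.iInf_singleton]
  rw [hs1] at h1; rw [hs2] at h2; rw [hs3] at h3; rw [hs4] at h4; rw [hs5] at h5
  rw [hs6] at h6; rw [hs7] at h7; rw [hs8] at h8; rw [hs9] at h9; rw [hs10] at h10
  have ing := ingleton_dual (W 3 ⊓ W 4) (W 7 ⊓ W 8) (W 1 ⊓ W 2) (W 5 ⊓ W 6)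
  omega
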